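/- On the q-deformed Fock space F^{(q)}, the commutator of the left annihilation operator (L_i^{(q)})* and the right creation operator R_j^{(q)} restricted to the n-particle space F_n^{(q)} equals δ_{ij} q^n times the identity of F_n^{(q)}, for all n ≥ 1. -/
import Mathlib


open Finset

/-- Coefficients of a vector of `F_n^{(q)} = (ℂ^d)^{⊗n}` with respect to the natural basis. -/
abbrev Tens (d n : ℕ) := (Fin n → Fin d) → ℂ

/-- The right creation operator `R_j^{(q)}` (appending `ξ_j`), on coefficients. -/
def rcre {d n : ℕ} (j : Fin d) (x : Tens d n) : Tens d (n + 1) :=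
  fun f => if f (Fin.last n) = j then x (Fin.init f) else 0

/-- The left annihilation operator `(L_j^{(q)})*`, acting by
`(L_j^{(q)})*(ξ_{i_1}⊗⋯⊗ξ_{i_{n+1}}) = Σ_m q^{m-1} δ_{j,i_m} ξ_{i_1}⊗⋯⊗(ξ_{i_m} deleted)⊗⋯`,
expressed on coefficients. -/
noncomputable def lann {d n : ℕ} (q : ℂ) (j : Fin d) (x : Tens d (n + 1)) : Tens d n :=
  fun g => ∑ m : Fin (n + 1), q ^ (m : ℕ) * x (m.insertNth j g)

lemma init_insertNth_castSucc {d m : ℕ} (k : Fin (m + 1)) (i : Fin d)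
    (f : Fin (m + 1) → Fin d) :
    Fin.init (Fin.insertNth (α := fun _ => Fin d) (k.castSucc) i f) =
      Fin.insertNth (α := fun _ => Fin d) k i (Fin.init f) := by
  funext l
  induction l using Fin.succAboveCases with
  | i => exact k
  | x =>
    simp [Fin.init, Fin.insertNth_apply_same]
  | p l' =>
    simp only [Fin.init, Fin.insertNth_apply_succAbove, ← Fin.castSucc_succAbove_castSucc]

/-- On the q-deformed Fock space, `[(L_i^{(q)})*, R_j^{(q)}]` restricted to `F_n^{(q)}`
equals `δ_{ij} q^n` times the identity of `F_n^{(q)}`, for all `n ≥ 1` (here `n = m + 1`). -/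
theorem lann_rcre_commutator (d : ℕ) (hd : 2 ≤ d) (q : ℂ) (i j : Fin d) (m : ℕ)
    (x : Tens d (m + 1)) :
    lann q i (rcre j x) - rcre j (lann q i x) =
      (if i = j then q ^ (m + 1) else 0) • x := by
  funext f
  simp only [Pi.sub_apply, Pi.smul_apply, smul_eq_mul, lann, rcre]
  rw [Fin.sum_univ_castSucc]
  have hlast : ∀ k : Fin (m + 1),
      Fin.insertNth (α := fun _ => Fin d) (k.castSucc) i f (Fin.last (m + 1)) = f (Fin.last m) := by
    intro k
    have : Fin.last (m + 1) = (k.castSucc).succAbove (Fin.last m) := by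
      rw [Fin.succAbove_castSucc_of_le _ _ (Fin.le_last k), Fin.succ_last]
    rw [this, Fin.insertNth_apply_succAbove]
  have hL : (Fin.insertNth (α := fun _ => Fin d) (Fin.last (m + 1)) i f) (Fin.last (m + 1)) = i :=
    Fin.insertNth_apply_same _ _ _
  have hLi : Fin.init (Fin.insertNth (α := fun _ => Fin d) (Fin.last (m + 1)) i f) = f := by
    rw [Fin.insertNth_last']; exact Fin.init_snoc _ _
  simp only [hlast, hL, hLi, init_insertNth_castSucc, Fin.coe_castSucc, Fin.val_last]
  by_cases hfj : f (Fin.last m) = j <;> by_cases hij : i = j <;>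
    simp [hfj, hij, mul_comm]
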